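/- arXiv:1504.03447 — 2 statements merged into one kernel-verified Lean document; each statement's English description precedes it below -/
import Mathlib

section
/- There exists a constant C' < ∞, depending only on Q and the regularity constants c0, C0, such that for every x ∈ X and every 0 < t ≤ 1: ∫_t^1 H(B(x,r+t) \ B(x,r-t)) r^{-Q-1} dr ≤ C', where B(x,r-t) is interpreted as the empty set when r - t ≤ 0. -/
open MeasureTheory Metric Set Filter
open scoped ENNReal NNReal Topology

noncomputable section

namespace Cutout

variable {X Ω : Type*} [MetricSpace X] [MeasurableSpace X]

/-- The radial measure `ρ(dr) = r^{-(Q+1)} dr` on `(0,1)`. -/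
def rho (Q : ℝ) : Measure ℝ :=
  (volume.restrict (Set.Ioo (0:ℝ) 1)).withDensity fun r => ENNReal.ofReal (r ^ (-Q - 1))

/-- Ahlfors–David `Q`-regularity of the measure `H` with constants `c0 < C0`. -/
def QRegular (H : Measure X) (Q c0 C0 : ℝ) : Prop :=
  0 < c0 ∧ c0 < C0 ∧
    ∀ (x : X) (r : ℝ), 0 < r → r < Metric.diam (Set.univ : Set X) →
      ENNReal.ofReal (c0 * r ^ Q) ≤ H (Metric.ball x r) ∧
        H (Metric.ball x r) ≤ ENNReal.ofReal (C0 * r ^ Q)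

/-- The average density `A(H,x,t) = (∫_t^1 H(B(x,r)) r^{-Q-1} dr) / (-log t)`. -/
def avg (H : Measure X) (Q : ℝ) (x : X) (t : ℝ) : ℝ :=
  (∫ r in t..1, (H (Metric.ball x r)).toReal * r ^ (-Q - 1)) / (-Real.log t)

/-- Upper average density. -/
def Aup (H : Measure X) (Q : ℝ) (x : X) : ℝ :=
  Filter.limsup (fun t => avg H Q x t) (𝓝[>] (0:ℝ))

/-- Lower average density. -/
def Alow (H : Measure X) (Q : ℝ) (x : X) : ℝ :=
  Filter.liminf (fun t => avg H Q x t) (𝓝[>] (0:ℝ))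

/-- `Δ_r(α,β) = {x : α < A(H,x,r) < β}`. -/
def DeltaR (H : Measure X) (Q α β r : ℝ) : Set X :=
  {x | α < avg H Q x r ∧ avg H Q x r < β}

/-- `Δ(α) = {x : A(H,x) exists and equals α}`. -/
def Delta (H : Measure X) (Q α : ℝ) : Set X :=
  {x | Alow H Q x = α ∧ Aup H Q x = α}

/-- The cutout set `E = X \ ∪_{(x,r)∈Y} B(x,r)`. -/
def cutoutE (Y : Ω → Set (X × ℝ)) (ω : Ω) : Set X :=
  {z | ∀ p ∈ Y ω, z ∉ Metric.ball p.1 p.2}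

/-- The partial cutout set `E_t = X \ ∪_{(x,r)∈Y, r>t} B(x,r)`. -/
def cutoutEt (Y : Ω → Set (X × ℝ)) (t : ℝ) (ω : Ω) : Set X :=
  {z | ∀ p ∈ Y ω, t < p.2 → z ∉ Metric.ball p.1 p.2}

/-- `Y` is a Poisson point process on `X × (0,1)` with intensity measure `μ`:
counts on disjoint Borel sets are independent, and the count on a Borel set `A`
is Poisson distributed with mean `μ A`. -/
structure IsPoissonPP [MeasurableSpace Ω]
    (P : Measure Ω) (Y : Ω → Set (X × ℝ)) (μ : Measure (X × ℝ)) : Prop where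
  radii : ∀ ω, ∀ p ∈ Y ω, p.2 ∈ Set.Ioo (0:ℝ) 1
  poisson : ∀ A : Set (X × ℝ), MeasurableSet A → μ A ≠ ⊤ → ∀ n : ℕ,
    P {ω | (Y ω ∩ A).encard = n} =
      ENNReal.ofReal (Real.exp (-(μ A).toReal) * (μ A).toReal ^ n / n.factorial)
  poisson_top : ∀ A : Set (X × ℝ), MeasurableSet A → μ A = ⊤ →
    P {ω | (Y ω ∩ A).Finite} = 0
  indepCounts : ∀ (m : ℕ) (A : Fin m → Set (X × ℝ)),
    (∀ i, MeasurableSet (A i)) → (Pairwise fun i j => Disjoint (A i) (A j)) →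
    ∀ n : Fin m → ℕ∞,
      P (⋂ i, {ω | (Y ω ∩ A i).encard = n i}) = ∏ i, P {ω | (Y ω ∩ A i).encard = n i}

/-- Mean value type estimate for negative powers. -/
lemma mvt_rpow {Q a b : ℝ} (hQ : 0 < Q) (ha : 0 < a) (hab : a ≤ b) :
    a ^ (-Q - 1) - b ^ (-Q - 1) ≤ (Q + 1) * (b - a) * a ^ (-Q - 2) := by
  set p : ℝ := Q + 1 with hp
  have hb : 0 < b := ha.trans_le hab
  have hx : (0:ℝ) < a / b := div_pos ha hb
  have hbern : 1 + p * (a / b - 1) ≤ (a / b) ^ p := by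
    have := one_add_mul_self_le_rpow_one_add (s := a / b - 1) (by linarith) (p := p) (by linarith)
    simpa using this
  have hkey : a ^ (-Q - 1) * (a / b) ^ p = b ^ (-Q - 1) := by
    rw [Real.div_rpow ha.le hb.le, show (-Q - 1 : ℝ) = -p by ring, Real.rpow_neg ha.le,
      Real.rpow_neg hb.le]
    field_simp
  have hap : (0:ℝ) < a ^ (-Q - 1) := Real.rpow_pos_of_pos ha _
  have h1 : a ^ (-Q - 1) - b ^ (-Q - 1) ≤ a ^ (-Q - 1) * (p * (1 - a / b)) := by
    have heq : a ^ (-Q - 1) - b ^ (-Q - 1) = a ^ (-Q - 1) * (1 - (a / b) ^ p) := by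
      rw [mul_sub, mul_one, hkey]
    rw [heq]
    apply mul_le_mul_of_nonneg_left _ hap.le
    nlinarith [hbern]
  have h2 : p * (1 - a / b) ≤ p * ((b - a) / a) := by
    apply mul_le_mul_of_nonneg_left _ (by linarith : (0:ℝ) ≤ p)
    rw [one_sub_div hb.ne']
    exact div_le_div_of_nonneg_left (by linarith) ha (by linarith)
  have h3 : a ^ (-Q - 1) * (p * ((b - a) / a)) = p * (b - a) * a ^ (-Q - 2) := by
    rw [show (-Q - 2 : ℝ) = (-Q - 1) + (-1) by ring, Real.rpow_add ha, Real.rpow_neg_one]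
    field_simp
  calc a ^ (-Q - 1) - b ^ (-Q - 1) ≤ a ^ (-Q - 1) * (p * (1 - a / b)) := h1
    _ ≤ a ^ (-Q - 1) * (p * ((b - a) / a)) := mul_le_mul_of_nonneg_left h2 hap.le
    _ = p * (b - a) * a ^ (-Q - 2) := h3

lemma intervalIntegrable_of_bounded' {φ : ℝ → ℝ} {a b K : ℝ} (hab : a ≤ b)
    (hφ : Measurable φ) (hK : ∀ u ∈ Set.Ioc a b, |φ u| ≤ K) :
    IntervalIntegrable φ volume a b := by
  rw [intervalIntegrable_iff_integrableOn_Ioc_of_le hab]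
  apply Measure.integrableOn_of_bounded (M := K) measure_Ioc_lt_top.ne
    hφ.aestronglyMeasurable
  exact (ae_restrict_iff' measurableSet_Ioc).2 (ae_of_all _ (by simpa [Real.norm_eq_abs] using hK))

set_option maxHeartbeats 1000000 in
theorem statement_6 {X : Type*} [MetricSpace X] [MeasurableSpace X] [BorelSpace X]
    (H : Measure X) (Q c0 C0 : ℝ) (hQ : 0 < Q)
    (hbdd : Bornology.IsBounded (Set.univ : Set X))
    (hH0 : H Set.univ ≠ 0) (hHfin : H Set.univ ≠ ⊤)
    (hreg : QRegular H Q c0 C0) :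
    ∃ C' : ℝ, ∀ (x : X) (t : ℝ), 0 < t → t ≤ 1 →
      (∫ r in t..1,
        (H (Metric.ball x (r + t) \ Metric.ball x (r - t))).toReal * r ^ (-Q - 1)) ≤ C' := by
  obtain ⟨hc0, hcC, hregb⟩ := hreg
  have hC0 : 0 < C0 := hc0.trans hcC
  set M : ℝ := (H Set.univ).toReal with hM
  have hM0 : 0 ≤ M := ENNReal.toReal_nonneg
  set d : ℝ := Metric.diam (Set.univ : Set X) with hd
  set C1 : ℝ := max C0 (M / d ^ Q) with hC1def
  have hC1 : 0 < C1 := lt_of_lt_of_le hC0 (le_max_left _ _)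
  set K : ℝ := C1 * (Q + 1) * 2 * 2 ^ (Q + 2) with hK
  have hKpos : 0 < K := by positivity
  have h4Q : (0:ℝ) < 4 ^ (Q + 1) := by positivity
  have h2Q : (0:ℝ) < 2 ^ (Q + 1) := by positivity
  refine ⟨M * 4 ^ (Q + 1) + K / 2 + 2 * M * 2 ^ (Q + 1), ?_⟩
  intro x t ht ht1
  set F : ℝ → ℝ := fun ρ => (H (Metric.ball x ρ)).toReal with hF
  have hballfin : ∀ ρ : ℝ, H (Metric.ball x ρ) ≠ ⊤ :=
    fun ρ => ne_top_of_le_ne_top hHfin (measure_mono (Set.subset_univ _))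
  have hFmono : Monotone F := fun a b hab =>
    ENNReal.toReal_mono (hballfin b) (measure_mono (Metric.ball_subset_ball hab))
  have hFmeas : Measurable F := hFmono.measurable
  have hF0 : ∀ ρ, 0 ≤ F ρ := fun ρ => ENNReal.toReal_nonneg
  have hFM : ∀ ρ, F ρ ≤ M := fun ρ =>
    ENNReal.toReal_mono hHfin (measure_mono (Set.subset_univ _))
  rcases eq_or_lt_of_le (Metric.diam_nonneg (s := (Set.univ : Set X))) with hd0 | hdpos
  · -- degenerate case: diam = 0, the annulus is a.e. empty
    rw [intervalIntegral.integral_of_le ht1]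
    have hzero : Set.EqOn
        (fun r : ℝ => (H (Metric.ball x (r + t) \ Metric.ball x (r - t))).toReal * r ^ (-Q - 1))
        (fun _ => (0:ℝ)) (Set.Ioc t 1) := by
      intro r hr
      have hball : Metric.ball x (r - t) = Set.univ := by
        apply Set.eq_univ_iff_forall.2
        intro z
        have hz : dist z x ≤ d := Metric.dist_le_diam_of_mem hbdd (Set.mem_univ _) (Set.mem_univ _)
        have : dist z x < r - t := by
          have h1 := hr.1
          have h2 : d = 0 := hd.trans hd0.symm
          linarith
        exact Metric.mem_ball.2 this
      simp [hball]
    rw [MeasureTheory.setIntegral_congr_fun measurableSet_Ioc hzero]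
    simp only [integral_zero]
    positivity
  · -- main case
    have key : ∀ r : ℝ, (H (Metric.ball x (r + t) \ Metric.ball x (r - t))).toReal * r ^ (-Q - 1)
        = F (r + t) * r ^ (-Q - 1) - F (r + -t) * r ^ (-Q - 1) := by
      intro r
      have hsub : Metric.ball x (r - t) ⊆ Metric.ball x (r + t) :=
        Metric.ball_subset_ball (by linarith)
      rw [measure_diff hsub measurableSet_ball.nullMeasurableSet (hballfin _),
        ENNReal.toReal_sub_of_le (measure_mono hsub) (hballfin _),
        show r + -t = r - t by ring]
      ring
    simp only [key]
    have hIg : ∀ a b c : ℝ, a ≤ b → 0 < a + c →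
        IntervalIntegrable (fun u => F u * (u + c) ^ (-Q - 1)) volume a b := by
      intro a b c hab hac
      apply intervalIntegrable_of_bounded' (K := M * (a + c) ^ (-Q - 1)) hab
        (hFmeas.mul ((measurable_id.add_const c).pow measurable_const))
      intro u hu
      show |F u * (u + c) ^ (-Q - 1)| ≤ M * (a + c) ^ (-Q - 1)
      have hu0 : 0 < u + c := by linarith [hu.1]
      rw [abs_of_nonneg (mul_nonneg (hF0 u) (Real.rpow_nonneg hu0.le _))]
      exact mul_le_mul (hFM u)
        (Real.rpow_le_rpow_of_nonpos hac (by linarith [hu.1]) (by linarith))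
        (Real.rpow_nonneg hu0.le _) hM0
    have hIr : ∀ c : ℝ, IntervalIntegrable (fun r => F (r + c) * r ^ (-Q - 1)) volume t 1 := by
      intro c
      have h := (hIg (t + c) (1 + c) (-c) (by linarith) (by linarith)).comp_add_right c
      simpa using h
    rcases lt_or_ge t (1/4) with ht4 | ht4
    · -- t < 1/4 : the substitution argument
      rw [intervalIntegral.integral_sub (hIr t) (hIr (-t))]
      have e1 : (∫ r in t..1, F (r + t) * r ^ (-Q - 1))
          = ∫ u in (t + t)..(1 + t), F u * (u + -t) ^ (-Q - 1) := by
        rw [← intervalIntegral.integral_comp_add_right (fun u => F u * (u + -t) ^ (-Q - 1)) t]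
        simp only [add_neg_cancel_right]
      have e2 : (∫ r in t..1, F (r + -t) * r ^ (-Q - 1))
          = ∫ u in (t + -t)..(1 + -t), F u * (u + t) ^ (-Q - 1) := by
        rw [← intervalIntegral.integral_comp_add_right (fun u => F u * (u + t) ^ (-Q - 1)) (-t)]
        simp only [neg_add_cancel_right]
      rw [e1, e2, show t + t = 2*t by ring, show t + -t = (0:ℝ) by ring,
        show 1 + -t = 1 - t by ring]
      have h2t1 : 2*t ≤ 1 - t := by linarith
      have h1t : (1:ℝ) - t ≤ 1 + t := by linarith
      have if1 := hIg (2*t) (1-t) (-t) h2t1 (by linarith)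
      have if2 := hIg (1-t) (1+t) (-t) h1t (by linarith)
      have ig1 := hIg 0 (2*t) t (by linarith) (by linarith)
      have ig2 := hIg (2*t) (1-t) t h2t1 (by linarith)
      rw [← intervalIntegral.integral_add_adjacent_intervals if1 if2,
          ← intervalIntegral.integral_add_adjacent_intervals ig1 ig2]
      have hJ1 : 0 ≤ ∫ u in (0:ℝ)..(2*t), F u * (u + t) ^ (-Q - 1) := by
        apply intervalIntegral.integral_nonneg (by linarith)
        intro u hu
        exact mul_nonneg (hF0 u) (Real.rpow_nonneg (by linarith [hu.1]) _)
      have hI2 : (∫ u in (1-t)..(1+t), F u * (u + -t) ^ (-Q - 1)) ≤ 2 * M * 2 ^ (Q+1) := by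
        calc (∫ u in (1-t)..(1+t), F u * (u + -t) ^ (-Q - 1))
            ≤ ∫ _u in (1-t)..(1+t), M * 2 ^ (Q+1) := by
              apply intervalIntegral.integral_mono_on h1t if2 intervalIntegrable_const
              intro u hu
              have hu2 : (1/2:ℝ) ≤ u + -t := by
                have := hu.1
                linarith
              have hw : (u + -t) ^ (-Q - 1) ≤ 2 ^ (Q+1) := by
                have h0 : (u + -t) ^ (-Q - 1) ≤ ((1:ℝ)/2) ^ (-Q - 1) :=
                  Real.rpow_le_rpow_of_nonpos (by norm_num) hu2 (by linarith)
                rwa [show ((1:ℝ)/2) = 2⁻¹ by norm_num,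
                  Real.inv_rpow (by norm_num : (0:ℝ) ≤ 2),
                  ← Real.rpow_neg (by norm_num : (0:ℝ) ≤ 2),
                  show -(-Q - 1) = Q + 1 by ring] at h0
              exact mul_le_mul (hFM u) hw (Real.rpow_nonneg (by linarith) _) hM0
          _ = M * 2 ^ (Q+1) * ((1+t) - (1-t)) := by
              rw [intervalIntegral.integral_const, smul_eq_mul]; ring
          _ ≤ 2 * M * 2 ^ (Q+1) := by nlinarith [mul_nonneg hM0 h2Q.le, ht1, ht.le]
      have hC1u : ∀ u : ℝ, 0 < u → F u ≤ C1 * u ^ Q := by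
        intro u hu
        rcases lt_or_ge u d with hud | hud
        · have hb := (hregb x u hu hud).2
          have hb' : F u ≤ C0 * u ^ Q :=
            ENNReal.toReal_le_of_le_ofReal (by positivity) hb
          calc F u ≤ C0 * u ^ Q := hb'
            _ ≤ C1 * u ^ Q :=
                mul_le_mul_of_nonneg_right (le_max_left _ _) (Real.rpow_nonneg hu.le _)
        · have hdQ : (0:ℝ) < d ^ Q := Real.rpow_pos_of_pos hdpos _
          calc F u ≤ M := hFM u
            _ = (M / d ^ Q) * d ^ Q := by field_simp
            _ ≤ C1 * u ^ Q :=
                mul_le_mul (le_max_right _ _) (Real.rpow_le_rpow hdpos.le hud hQ.le)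
                  hdQ.le hC1.le
      have hmain : (∫ u in (2*t)..(1-t), F u * (u + -t) ^ (-Q - 1)) -
          (∫ u in (2*t)..(1-t), F u * (u + t) ^ (-Q - 1)) ≤ K / 2 := by
        rw [← intervalIntegral.integral_sub if1 ig2]
        have hptwise : ∀ u ∈ Set.Icc (2*t) (1-t),
            F u * (u + -t) ^ (-Q - 1) - F u * (u + t) ^ (-Q - 1) ≤ K * t * u ^ (-2:ℝ) := by
          intro u hu
          obtain ⟨hu1, hu2⟩ := hu
          have hu0 : (0:ℝ) < u := by linarith
          have hut : (0:ℝ) < u + -t := by linarith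
          have huu : u + -t ≤ u + t := by linarith
          have hfact : F u * (u + -t) ^ (-Q - 1) - F u * (u + t) ^ (-Q - 1)
              = F u * ((u + -t) ^ (-Q - 1) - (u + t) ^ (-Q - 1)) := by ring
          rw [hfact]
          have hd1 : (u + -t) ^ (-Q - 1) - (u + t) ^ (-Q - 1)
              ≤ (Q+1) * ((u + t) - (u + -t)) * (u + -t) ^ (-Q - 2) := mvt_rpow hQ hut huu
          have hd2 : (u + -t) ^ (-Q - 2) ≤ 2 ^ (Q+2) * u ^ (-Q - 2) := by
            have h1 : (u + -t) ^ (-Q - 2) ≤ (u/2) ^ (-Q - 2) :=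
              Real.rpow_le_rpow_of_nonpos (by linarith) (by linarith) (by linarith)
            have h2 : (u/2 : ℝ) ^ (-Q - 2) = 2 ^ (Q+2) * u ^ (-Q - 2) := by
              rw [Real.div_rpow hu0.le (by norm_num : (0:ℝ) ≤ 2),
                show (-Q - 2 : ℝ) = -(Q+2) by ring,
                Real.rpow_neg (by norm_num : (0:ℝ) ≤ 2), div_eq_mul_inv, inv_inv]
              ring
            rw [h2] at h1
            exact h1
          have hcoef : (0:ℝ) ≤ (Q+1) * ((u + t) - (u + -t)) := by nlinarith [ht.le]
          have hw0 : 0 ≤ (u + -t) ^ (-Q - 1) - (u + t) ^ (-Q - 1) :=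
            sub_nonneg.2 (Real.rpow_le_rpow_of_nonpos hut huu (by linarith))
          calc F u * ((u + -t) ^ (-Q - 1) - (u + t) ^ (-Q - 1))
              ≤ (C1 * u ^ Q) * ((Q+1) * ((u + t) - (u + -t)) * (2 ^ (Q+2) * u ^ (-Q - 2))) := by
                apply mul_le_mul (hC1u u hu0) ?_ hw0 (by positivity)
                calc (u + -t) ^ (-Q - 1) - (u + t) ^ (-Q - 1)
                    ≤ (Q+1) * ((u + t) - (u + -t)) * (u + -t) ^ (-Q - 2) := hd1
                  _ ≤ (Q+1) * ((u + t) - (u + -t)) * (2 ^ (Q+2) * u ^ (-Q - 2)) :=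
                      mul_le_mul_of_nonneg_left hd2 hcoef
            _ = K * t * (u ^ Q * u ^ (-Q - 2)) := by rw [hK]; ring
            _ = K * t * u ^ (-2:ℝ) := by
                rw [← Real.rpow_add hu0, show Q + (-Q - 2) = (-2:ℝ) by ring]
        have hintrpow : IntervalIntegrable (fun u : ℝ => K * t * u ^ (-2:ℝ)) volume (2*t) (1-t) := by
          apply intervalIntegrable_of_bounded' (K := K * t * (2*t) ^ (-2:ℝ)) h2t1
            (measurable_const.mul ((measurable_id'.pow measurable_const)))
          intro u hu
          show |K * t * u ^ (-2:ℝ)| ≤ K * t * (2*t) ^ (-2:ℝ)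
          have hu0 : (0:ℝ) < u := lt_trans (by linarith) hu.1
          rw [abs_of_nonneg (by positivity)]
          have : u ^ (-2:ℝ) ≤ (2*t) ^ (-2:ℝ) :=
            Real.rpow_le_rpow_of_nonpos (by linarith) hu.1.le (by norm_num)
          nlinarith [hKpos.le, ht.le, mul_nonneg hKpos.le ht.le]
        calc (∫ u in (2*t)..(1-t),
              (F u * (u + -t) ^ (-Q - 1) - F u * (u + t) ^ (-Q - 1)))
            ≤ ∫ u in (2*t)..(1-t), K * t * u ^ (-2:ℝ) :=
              intervalIntegral.integral_mono_on h2t1 (if1.sub ig2) hintrpow hptwise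
          _ = K * t * ∫ u in (2*t)..(1-t), u ^ (-2:ℝ) := by
              rw [← intervalIntegral.integral_const_mul]
          _ ≤ K / 2 := by
              rw [integral_rpow
                (Or.inr ⟨by norm_num, Set.notMem_uIcc_of_lt (by linarith) (by linarith)⟩)]
              have hrw : K * t * (((1-t) ^ (-2 + 1 : ℝ) - (2*t) ^ (-2 + 1 : ℝ)) / (-2 + 1))
                  = K / 2 - K * t * (1-t)⁻¹ := by
                rw [show (-2 + 1 : ℝ) = -1 by norm_num, Real.rpow_neg_one, Real.rpow_neg_one]
                have h1t0 : (1:ℝ) - t ≠ 0 := by linarith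
                field_simp
                ring
              rw [hrw]
              have : 0 ≤ K * t * (1-t)⁻¹ := by
                apply mul_nonneg (mul_nonneg hKpos.le ht.le)
                rw [inv_nonneg]
                linarith
              linarith
      have hfinal : (0:ℝ) ≤ M * 4 ^ (Q + 1) := mul_nonneg hM0 h4Q.le
      linarith [hmain, hI2, hJ1, hfinal]
    · -- 1/4 ≤ t : crude bound
      have hint : IntervalIntegrable
          (fun r => F (r + t) * r ^ (-Q - 1) - F (r + -t) * r ^ (-Q - 1)) volume t 1 :=
        (hIr t).sub (hIr (-t))
      calc (∫ r in t..1, (F (r + t) * r ^ (-Q - 1) - F (r + -t) * r ^ (-Q - 1)))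
          ≤ ∫ _r in t..1, M * 4 ^ (Q+1) := by
            apply intervalIntegral.integral_mono_on ht1 hint intervalIntegrable_const
            intro r hr
            have hr0 : (0:ℝ) < r := lt_of_lt_of_le ht hr.1
            have h1 : 0 ≤ F (r + -t) * r ^ (-Q - 1) :=
              mul_nonneg (hF0 _) (Real.rpow_nonneg hr0.le _)
            have h2 : r ^ (-Q - 1) ≤ 4 ^ (Q + 1) := by
              have h0 : r ^ (-Q - 1) ≤ ((1:ℝ)/4) ^ (-Q - 1) :=
                Real.rpow_le_rpow_of_nonpos (by norm_num) (le_trans ht4 hr.1) (by linarith)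
              rwa [show ((1:ℝ)/4) = 4⁻¹ by norm_num,
                Real.inv_rpow (by norm_num : (0:ℝ) ≤ 4),
                ← Real.rpow_neg (by norm_num : (0:ℝ) ≤ 4),
                show -(-Q - 1) = Q + 1 by ring] at h0
            have h3 : F (r + t) * r ^ (-Q - 1) ≤ M * 4 ^ (Q+1) :=
              mul_le_mul (hFM _) h2 (Real.rpow_nonneg hr0.le _) hM0
            linarith
        _ = M * 4 ^ (Q+1) * (1 - t) := by
            rw [intervalIntegral.integral_const, smul_eq_mul]; ring
        _ ≤ M * 4 ^ (Q + 1) + K / 2 + 2 * M * 2 ^ (Q + 1) := by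
            nlinarith [mul_nonneg hM0 h4Q.le, mul_nonneg hM0 h2Q.le, hKpos.le, ht.le, ht1]


end Cutout
end
end

section
/- Assume diam(X) ≤ 1 and extend p by setting p(x,u) = 1 for u ≥ 1. There exists a constant C < ∞, depending only on γ, Q and the regularity constants c0, C0 (in particular independent of δ, x and y), such that for all distinct points x, y ∈ X and all 0 < δ < 1: P(x ∈ E_δ and y ∈ E_δ) ≤ C·p(x,δ)·p(y,δ)/p(x,d(x,y)). -/
open MeasureTheory Metric Set Filter
open scoped ENNReal NNReal Topology

noncomputable section

namespace Cutout

variable {X Ω : Type*} [MetricSpace X] [MeasurableSpace X]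

instance rho_sfinite (Q : ℝ) : SFinite (rho Q) := by
  rw [rho]; infer_instance

private lemma rho_le {Q a : ℝ} (hQ : -Q - 1 ≤ 0) (ha : 0 < a) {S : Set ℝ}
    (hS : MeasurableSet S) (hSa : S ⊆ Set.Ioi a) :
    rho Q S ≤ ENNReal.ofReal (a ^ (-Q - 1)) * volume S := by
  rw [rho, withDensity_apply _ hS, Measure.restrict_restrict hS]
  calc ∫⁻ r in S ∩ Set.Ioo 0 1, ENNReal.ofReal (r ^ (-Q - 1))
      ≤ ∫⁻ _ in S ∩ Set.Ioo 0 1, ENNReal.ofReal (a ^ (-Q - 1)) := by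
        refine setLIntegral_mono' (hS.inter measurableSet_Ioo) fun r hr => ?_
        exact ENNReal.ofReal_le_ofReal
          (Real.rpow_le_rpow_of_nonpos ha (le_of_lt (hSa hr.1)) hQ)
    _ = ENNReal.ofReal (a ^ (-Q - 1)) * volume (S ∩ Set.Ioo 0 1) :=
        setLIntegral_const _ _
    _ ≤ ENNReal.ofReal (a ^ (-Q - 1)) * volume S :=
        mul_le_mul_right (measure_mono Set.inter_subset_left) _

private lemma measure_ball_le {X : Type*} [MetricSpace X] [MeasurableSpace X]
    {H : Measure X} {Q c0 C0 : ℝ}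
    (hreg : QRegular H Q c0 C0) (hQ : 0 < Q) (x : X) {d : ℝ} (hd : 0 < d)
    (hdd : d ≤ Metric.diam (Set.univ : Set X)) :
    H (Metric.ball x d) ≤ ENNReal.ofReal (C0 * d ^ Q) := by
  have hC0 : 0 < C0 := hreg.1.trans hreg.2.1
  have hmono : Monotone (fun n : ℕ => Metric.ball x (d - d / (n + 2))) := by
    intro m n hmn
    apply Metric.ball_subset_ball
    have h2 : (0:ℝ) < (m:ℝ) + 2 := by positivity
    have h3 : (m:ℝ) + 2 ≤ (n:ℝ) + 2 := by
      have : (m:ℝ) ≤ n := Nat.cast_le.2 hmn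
      linarith
    have := div_le_div_of_nonneg_left hd.le h2 h3
    linarith
  have hunion : Metric.ball x d = ⋃ n : ℕ, Metric.ball x (d - d / (n + 2)) := by
    ext z
    simp only [Metric.mem_ball, Set.mem_iUnion]
    constructor
    · intro hz
      have h1 : 0 < d - dist z x := by linarith
      obtain ⟨n, hn⟩ := exists_nat_gt (d / (d - dist z x))
      refine ⟨n, ?_⟩
      have h2 : (0:ℝ) < (n:ℝ) + 2 := by positivity
      have h3 : d / (d - dist z x) < (n:ℝ) + 2 := by
        have : (n:ℝ) ≤ (n:ℝ) + 2 := by linarith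
        linarith
      have h4 : d < (d - dist z x) * ((n:ℝ) + 2) := by
        rw [div_lt_iff₀ h1] at h3
        linarith
      have h5 : d / ((n:ℝ) + 2) < d - dist z x := by
        rw [div_lt_iff₀ h2]
        nlinarith
      linarith
    · rintro ⟨n, hn⟩
      have h2 : (0:ℝ) ≤ d / ((n:ℝ) + 2) := by positivity
      linarith
  rw [hunion, hmono.directed_le.measure_iUnion]
  refine iSup_le fun n => ?_
  have h2 : (0:ℝ) < (n:ℝ) + 2 := by positivity
  have hlt : d / ((n:ℝ) + 2) < d := by
    rw [div_lt_iff₀ h2]; nlinarith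
  have hpos : (0:ℝ) < d / ((n:ℝ) + 2) := by positivity
  have hr0 : 0 < d - d / ((n:ℝ) + 2) := by linarith
  have hrd : d - d / ((n:ℝ) + 2) < d := by linarith
  refine ((hreg.2.2 x _ hr0 (lt_of_lt_of_le hrd hdd)).2).trans ?_
  apply ENNReal.ofReal_le_ofReal
  have hrp := Real.rpow_le_rpow hr0.le hrd.le hQ.le
  exact mul_le_mul_of_nonneg_left hrp hC0.le

theorem statement_9 {X Ω : Type*} [MetricSpace X] [MeasurableSpace X] [BorelSpace X]
    [MeasurableSpace Ω] (P : Measure Ω) [IsProbabilityMeasure P]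
    (H : Measure X) (Q c0 C0 γ : ℝ) (hQ : 0 < Q) (hγ : 0 < γ)
    (hbdd : Bornology.IsBounded (Set.univ : Set X))
    (hH0 : H Set.univ ≠ 0) (hHfin : H Set.univ ≠ ⊤)
    (hreg : QRegular H Q c0 C0)
    (Y : Ω → Set (X × ℝ))
    (hY : IsPoissonPP P Y (ENNReal.ofReal γ • (H.prod (rho Q))))
    (hdiam : Metric.diam (Set.univ : Set X) ≤ 1) :
    ∃ C : ℝ, ∀ (x y : X) (δ : ℝ), x ≠ y → 0 < δ → δ < 1 →
      (P {ω | x ∈ cutoutEt Y δ ω ∧ y ∈ cutoutEt Y δ ω}).toReal ≤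
        C * (P {ω | x ∈ cutoutEt Y δ ω}).toReal * (P {ω | y ∈ cutoutEt Y δ ω}).toReal /
          (if 1 ≤ dist x y then 1 else (P {ω | x ∈ cutoutEt Y (dist x y) ω}).toReal) := by
  have hC0 : 0 < C0 := hreg.1.trans hreg.2.1
  have hQ' : -Q - 1 ≤ 0 := by linarith
  set μ : Measure (X × ℝ) := ENNReal.ofReal γ • (H.prod (rho Q)) with hμ
  set A : X → ℝ → Set (X × ℝ) :=
    fun z t => {p : X × ℝ | t < p.2 ∧ p.2 < 1 ∧ dist z p.1 < p.2} with hA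
  have hAmeas : ∀ z t, MeasurableSet (A z t) := by
    intro z t
    have h1 : MeasurableSet {p : X × ℝ | t < p.2} :=
      measurableSet_lt measurable_const measurable_snd
    have h2 : MeasurableSet {p : X × ℝ | p.2 < 1} :=
      measurableSet_lt measurable_snd measurable_const
    have h3 : MeasurableSet {p : X × ℝ | dist z p.1 < p.2} :=
      measurableSet_lt (((continuous_const.dist continuous_id).measurable).comp measurable_fst) measurable_snd
    have : A z t = {p : X × ℝ | t < p.2} ∩ ({p : X × ℝ | p.2 < 1} ∩
        {p : X × ℝ | dist z p.1 < p.2}) := by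
      ext p; simp [hA, Set.mem_setOf_eq, and_assoc]
    rw [this]
    exact h1.inter (h2.inter h3)
  have hevent : ∀ (z : X) (t : ℝ) (ω : Ω),
      z ∈ cutoutEt Y t ω ↔ Y ω ∩ A z t = ∅ := by
    intro z t ω
    rw [Set.eq_empty_iff_forall_notMem]
    constructor
    · rintro h p ⟨hpY, ht, -, hd⟩
      exact h p hpY ht (Metric.mem_ball.2 hd)
    · intro h p hpY ht hd
      exact h p ⟨hpY, ht, (hY.radii ω p hpY).2, Metric.mem_ball.1 hd⟩
  have hprob : ∀ S : Set (X × ℝ), MeasurableSet S → μ S ≠ ⊤ →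
      P {ω | Y ω ∩ S = ∅} = ENNReal.ofReal (Real.exp (-(μ S).toReal)) := by
    intro S hS hfin
    have h0 := hY.poisson S hS hfin 0
    simpa using h0
  have hfinA : ∀ (z : X) (t : ℝ), 0 < t → μ (A z t) ≠ ⊤ := by
    intro z t ht
    have hsub : A z t ⊆ Set.univ ×ˢ Set.Ioo t 1 := by
      rintro ⟨p1, p2⟩ ⟨h1, h2, -⟩
      exact ⟨trivial, h1, h2⟩
    refine ne_top_of_le_ne_top ?_ (measure_mono hsub)
    rw [hμ, Measure.smul_apply, Measure.prod_prod, smul_eq_mul]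
    have h1 : rho Q (Set.Ioo t 1) ≤ ENNReal.ofReal (t ^ (-Q - 1)) * volume (Set.Ioo t 1) :=
      rho_le hQ' ht measurableSet_Ioo Set.Ioo_subset_Ioi_self
    have h2 : rho Q (Set.Ioo t 1) ≠ ⊤ := by
      refine ne_top_of_le_ne_top ?_ h1
      rw [Real.volume_Ioo]
      exact ENNReal.mul_ne_top ENNReal.ofReal_ne_top ENNReal.ofReal_ne_top
    exact ENNReal.mul_ne_top ENNReal.ofReal_ne_top (ENNReal.mul_ne_top hHfin h2)
  refine ⟨Real.exp (γ * C0 * 2 ^ Q), fun x y δ hxy hδ0 hδ1 => ?_⟩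
  set d : ℝ := dist x y with hd_def
  have hd0 : 0 < d := dist_pos.2 hxy
  have hddiam : d ≤ Metric.diam (Set.univ : Set X) :=
    Metric.dist_le_diam_of_mem hbdd (Set.mem_univ x) (Set.mem_univ y)
  -- inclusion A x δ ∩ A y δ ⊆ A x d ∪ D
  have hsub : A x δ ∩ A y δ ⊆ A x d ∪ (Metric.ball x d ×ˢ Set.Ioc (d / 2) d) := by
    rintro ⟨z, r⟩ ⟨⟨h1, h2, h3⟩, ⟨h1', h2', h3'⟩⟩
    have htri : d ≤ dist x z + dist y z := by
      rw [hd_def, dist_comm y z]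
      exact dist_triangle x z y
    have hr : d / 2 < r := by linarith
    by_cases hrd : d < r
    · exact Or.inl ⟨hrd, h2, h3⟩
    · push_neg at hrd
      refine Or.inr (Set.mem_prod.2 ⟨Metric.mem_ball.2 ?_, hr, hrd⟩)
      rw [dist_comm]
      exact lt_of_lt_of_le h3 hrd
  have hmuD : μ (Metric.ball x d ×ˢ Set.Ioc (d / 2) d)
      ≤ ENNReal.ofReal (γ * C0 * 2 ^ Q) := by
    rw [hμ, Measure.smul_apply, Measure.prod_prod, smul_eq_mul]
    have hball := measure_ball_le hreg hQ x hd0 hddiam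
    have hrho : rho Q (Set.Ioc (d / 2) d)
        ≤ ENNReal.ofReal ((d / 2) ^ (-Q - 1)) * volume (Set.Ioc (d / 2) d) :=
      rho_le hQ' (half_pos hd0) measurableSet_Ioc Set.Ioc_subset_Ioi_self
    rw [Real.volume_Ioc, (by ring : d - d / 2 = d / 2)] at hrho
    calc ENNReal.ofReal γ * (H (Metric.ball x d) * rho Q (Set.Ioc (d / 2) d))
        ≤ ENNReal.ofReal γ * (ENNReal.ofReal (C0 * d ^ Q) *
            (ENNReal.ofReal ((d / 2) ^ (-Q - 1)) * ENNReal.ofReal (d / 2))) := by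
          gcongr
      _ = ENNReal.ofReal (γ * (C0 * d ^ Q * ((d / 2) ^ (-Q - 1) * (d / 2)))) := by
          rw [← ENNReal.ofReal_mul (by positivity), ← ENNReal.ofReal_mul (by positivity),
            ← ENNReal.ofReal_mul (by positivity)]
      _ ≤ ENNReal.ofReal (γ * C0 * 2 ^ Q) := by
          apply ENNReal.ofReal_le_ofReal
          have hhalf : (0:ℝ) < d / 2 := half_pos hd0
          have e1 : (d / 2) ^ (-Q - 1) * (d / 2) = (d / 2) ^ (-Q) := by
            have := (Real.rpow_add hhalf (-Q - 1) 1).symm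
            rw [Real.rpow_one] at this
            rw [this]
            norm_num
          have hdQ : (0:ℝ) < d ^ Q := Real.rpow_pos_of_pos hd0 Q
          have h2Q : (0:ℝ) < (2:ℝ) ^ Q := Real.rpow_pos_of_pos two_pos Q
          have e2 : d ^ Q * (d / 2) ^ (-Q) = 2 ^ Q := by
            rw [Real.rpow_neg hhalf.le, Real.div_rpow hd0.le (by norm_num : (0:ℝ) ≤ 2)]
            field_simp
          calc γ * (C0 * d ^ Q * ((d / 2) ^ (-Q - 1) * (d / 2)))
              = γ * C0 * (d ^ Q * (d / 2) ^ (-Q)) := by rw [e1]; ring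
            _ ≤ γ * C0 * 2 ^ Q := le_of_eq (by rw [e2])
  -- finiteness
  have hfinAx : μ (A x δ) ≠ ⊤ := hfinA x δ hδ0
  have hfinAy : μ (A y δ) ≠ ⊤ := hfinA y δ hδ0
  have hfinAd : μ (A x d) ≠ ⊤ := hfinA x d hd0
  have hfinU : μ (A x δ ∪ A y δ) ≠ ⊤ :=
    ne_top_of_le_ne_top (ENNReal.add_ne_top.2 ⟨hfinAx, hfinAy⟩) (measure_union_le _ _)
  have hfinI : μ (A x δ ∩ A y δ) ≠ ⊤ :=
    ne_top_of_le_ne_top hfinAx (measure_mono Set.inter_subset_left)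
  set a : ℝ := (μ (A x δ)).toReal with ha_def
  set b : ℝ := (μ (A y δ)).toReal with hb_def
  set c : ℝ := (μ (A x δ ∩ A y δ)).toReal with hc_def
  set e : ℝ := (μ (A x d)).toReal with he_def
  have hu : (μ (A x δ ∪ A y δ)).toReal = a + b - c := by
    have h := measure_union_add_inter (μ := μ) (A x δ) (hAmeas y δ)
    have h2 := congrArg ENNReal.toReal h
    rw [ENNReal.toReal_add hfinU hfinI, ENNReal.toReal_add hfinAx hfinAy] at h2
    linarith
  have hcK : c ≤ e + γ * C0 * 2 ^ Q := by
    have hle : μ (A x δ ∩ A y δ) ≤ μ (A x d) + ENNReal.ofReal (γ * C0 * 2 ^ Q) :=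
      (measure_mono hsub).trans ((measure_union_le _ _).trans (by gcongr))
    have h2 : c ≤ (μ (A x d) + ENNReal.ofReal (γ * C0 * 2 ^ Q)).toReal :=
      ENNReal.toReal_mono (ENNReal.add_ne_top.2 ⟨hfinAd, ENNReal.ofReal_ne_top⟩) hle
    rwa [ENNReal.toReal_add hfinAd ENNReal.ofReal_ne_top,
      ENNReal.toReal_ofReal (by positivity)] at h2
  -- rewrite the events
  have hexy : {ω | x ∈ cutoutEt Y δ ω ∧ y ∈ cutoutEt Y δ ω}
      = {ω | Y ω ∩ (A x δ ∪ A y δ) = ∅} := by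
    ext ω
    simp only [Set.mem_setOf_eq, hevent, Set.inter_union_distrib_left,
      Set.union_empty_iff]
  have hex : {ω | x ∈ cutoutEt Y δ ω} = {ω | Y ω ∩ A x δ = ∅} := by
    ext ω; exact hevent x δ ω
  have hey : {ω | y ∈ cutoutEt Y δ ω} = {ω | Y ω ∩ A y δ = ∅} := by
    ext ω; exact hevent y δ ω
  have hden : (if (1:ℝ) ≤ d then (1:ℝ)
      else (P {ω | x ∈ cutoutEt Y d ω}).toReal) = Real.exp (-e) := by
    by_cases h1d : (1:ℝ) ≤ d
    · rw [if_pos h1d]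
      have hAd : A x d = ∅ := by
        ext p
        simp only [hA, Set.mem_setOf_eq, Set.mem_empty_iff_false, iff_false, not_and]
        intro h1 h2
        linarith
      have he0 : e = 0 := by
        rw [he_def, hAd, measure_empty, ENNReal.toReal_zero]
      rw [he0, neg_zero, Real.exp_zero]
    · rw [if_neg h1d]
      have : {ω | x ∈ cutoutEt Y d ω} = {ω | Y ω ∩ A x d = ∅} := by
        ext ω; exact hevent x d ω
      rw [this, hprob _ (hAmeas x d) hfinAd, ENNReal.toReal_ofReal (Real.exp_nonneg _)]
  rw [hexy, hprob _ ((hAmeas x δ).union (hAmeas y δ)) hfinU,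
    ENNReal.toReal_ofReal (Real.exp_nonneg _), hu,
    hex, hprob _ (hAmeas x δ) hfinAx, ENNReal.toReal_ofReal (Real.exp_nonneg _),
    hey, hprob _ (hAmeas y δ) hfinAy, ENNReal.toReal_ofReal (Real.exp_nonneg _), hden]
  have hrhs : Real.exp (γ * C0 * 2 ^ Q) * Real.exp (-a) * Real.exp (-b) / Real.exp (-e)
      = Real.exp (γ * C0 * 2 ^ Q + -a + -b - -e) := by
    rw [Real.exp_sub, Real.exp_add, Real.exp_add]
  rw [hrhs]
  apply Real.exp_le_exp.mpr
  linarith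

end Cutout
end
end
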